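/- Let γ ∈ (0,1), let k ≥ 1 be a natural number, and let (a_n)_{n∈ℕ} be a sequence of real numbers with ∑_{n=0}^∞ (γ^k)^n · |a_n| < ∞. Define the low-level auxiliary reward sequence r_t := a_{⌊t/k⌋} / k for t ∈ ℕ (each block value split evenly among its k steps). Then the low-level discounted return satisfies ∑_{t=0}^∞ γ^t · r_t = (1/k) · ((1 − γ^k)/(1 − γ)) · ∑_{n=0}^∞ (γ^k)^n · a_n. -/

import Mathlib

/-- HAAR low-level discounted return (Lemma 3): with the auxiliary reward
`r t = a (t / k) / k` (each block value split evenly among its `k` steps),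
the low-level discounted return equals
`(1/k) * ((1 - γ^k)/(1 - γ))` times the `k`-step-discounted sum of `a`. -/
theorem low_level_discounted_return_of_split_reward
    (γ : ℝ) (hγ0 : 0 < γ) (hγ1 : γ < 1) (k : ℕ) (hk : 1 ≤ k) (a : ℕ → ℝ)
    (ha : Summable fun n => (γ ^ k) ^ n * |a n|) (r : ℕ → ℝ)
    (hr : ∀ t : ℕ, r t = a (t / k) / k) :
    ∑' t : ℕ, γ ^ t * r t =
      (1 / (k : ℝ)) * ((1 - γ ^ k) / (1 - γ)) * ∑' n : ℕ, (γ ^ k) ^ n * a n := by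
  haveI : NeZero k := ⟨by omega⟩
  have hk0 : (k : ℝ) ≠ 0 := Nat.cast_ne_zero.mpr (by omega)
  have hγ1' : γ ≠ 1 := ne_of_lt hγ1
  have h1γ : (1 : ℝ) - γ ≠ 0 := by intro h; apply hγ1'; linarith
  have hgeom : ∑ i ∈ Finset.range k, γ ^ i = (1 - γ ^ k) / (1 - γ) := by
    rw [geom_sum_eq hγ1']
    rw [div_eq_div_iff (by intro h; apply hγ1'; linarith) h1γ]
    ring
  set f : ℕ × Fin k → ℝ := fun p => γ ^ (p.1 * k + (p.2 : ℕ)) * (a p.1 / k) with hf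
  have hfe : ∀ t : ℕ, γ ^ t * r t = f (Nat.divModEquiv k t) := by
    intro t
    simp only [hf, Nat.divModEquiv, Equiv.coe_fn_mk, hr, Fin.val_natCast,
      Nat.div_add_mod]
    have ht : t / k * k + t % k = t := by rw [mul_comm]; exact Nat.div_add_mod t k
    rw [Fin.val_ofNat, ht]
  have hnorm : ∀ p : ℕ × Fin k, ‖f p‖ = γ ^ ((p.2 : ℕ)) * ((γ ^ k) ^ p.1 * |a p.1| / k) := by
    intro ⟨n, i⟩
    simp only [hf, Real.norm_eq_abs, abs_mul, abs_div, abs_pow, abs_of_pos hγ0,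
      Nat.abs_cast, pow_add, ← pow_mul, mul_comm n k]
    ring
  have hsum : Summable f := by
    apply Summable.of_norm
    simp only [hnorm]
    rw [summable_prod_of_nonneg (fun p => by positivity)]
    refine ⟨fun n => Summable.of_finite, ?_⟩
    have h2 : Summable fun n : ℕ => (∑ i : Fin k, γ ^ (i : ℕ)) * ((γ ^ k) ^ n * |a n| / k) :=
      (ha.div_const k).mul_left _
    convert h2 using 2 with n
    rw [tsum_fintype]
    simp [Finset.sum_mul]
  calc ∑' t : ℕ, γ ^ t * r t = ∑' p : ℕ × Fin k, f p := by
        rw [← (Nat.divModEquiv k).tsum_eq f]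
        exact tsum_congr hfe
    _ = ∑' n : ℕ, ∑ i : Fin k, f (n, i) := by
        rw [hsum.tsum_prod' (fun n => Summable.of_finite)]
        exact tsum_congr fun n => tsum_fintype _
    _ = _ := by
        rw [← tsum_mul_left]
        refine tsum_congr fun n => ?_
        simp only [hf]
        rw [← Finset.sum_mul, Fin.sum_univ_eq_sum_range (fun i => γ ^ (n * k + i)) k]
        have : ∑ i ∈ Finset.range k, γ ^ (n * k + i) =
            γ ^ (n * k) * ((1 - γ ^ k) / (1 - γ)) := by
          simp only [pow_add, ← Finset.mul_sum, hgeom]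
        rw [this, ← pow_mul, mul_comm n k]
        field_simp
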